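/- For every natural number k ≥ 1, the minimal Colless index satisfies c(2^k − 1) = k − 1. -/
import Mathlib


/-- Full binary trees: either a single leaf, or a node with two full binary subtrees. -/
inductive FBT : Type
  | leaf : FBT
  | node : FBT → FBT → FBT

namespace FBT

/-- Number of leaves of a full binary tree. -/
def leaves : FBT → ℕ
  | leaf => 1
  | node a b => leaves a + leaves b

/-- The Colless index: the sum over internal nodes of the absolute difference of the
numbers of leaves of the two maximal pending subtrees. -/
def colless : FBT → ℕ
  | leaf => 0
  | node a b => colless a + colless b + Nat.dist (leaves a) (leaves b)

end FBT

/-- The minimal Colless index over all full binary trees with `n` leaves. -/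
noncomputable def minColless (n : ℕ) : ℕ :=
  sInf {m : ℕ | ∃ T : FBT, T.leaves = n ∧ T.colless = m}

namespace FBT

def full : ℕ → FBT
  | 0 => leaf
  | k+1 => node (full k) (full k)

lemma full_leaves (k : ℕ) : (full k).leaves = 2 ^ k := by
  induction k with
  | zero => rfl
  | succ k ih => simp [full, leaves, ih, pow_succ]; ring

lemma full_colless (k : ℕ) : (full k).colless = 0 := by
  induction k with
  | zero => rfl
  | succ k ih => simp [full, colless, ih]

def cat : ℕ → FBT
  | 0 => leaf
  | k+1 => node (full (k+1)) (cat k)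

lemma cat_leaves (k : ℕ) : (cat k).leaves = 2 ^ (k+1) - 1 := by
  induction k with
  | zero => rfl
  | succ k ih =>
    have h : (1:ℕ) ≤ 2 ^ (k+1) := Nat.one_le_two_pow
    simp [cat, leaves, ih, full_leaves, pow_succ]
    omega

lemma cat_colless (k : ℕ) : (cat k).colless = k := by
  induction k with
  | zero => rfl
  | succ k ih =>
    have h : (1:ℕ) ≤ 2 ^ (k+1) := Nat.one_le_two_pow
    simp [cat, colless, ih, full_colless, full_leaves, cat_leaves, Nat.dist]
    omega

lemma leaves_pos (T : FBT) : 1 ≤ T.leaves := by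
  induction T with
  | leaf => exact le_refl 1
  | node a b iha ihb => simp [leaves]; omega

end FBT

/-- Binary digit sum. -/
def dsum : ℕ → ℕ
  | 0 => 0
  | n+1 => dsum ((n+1)/2) + (n+1) % 2
decreasing_by simp_wf; omega

lemma dsum_zero : dsum 0 = 0 := by rw [dsum]

lemma dsum_eq (n : ℕ) : dsum (n+1) = dsum ((n+1)/2) + (n+1) % 2 := by
  rw [dsum]

lemma dsum_two_mul (n : ℕ) : dsum (2*n) = dsum n := by
  cases n with
  | zero => rfl
  | succ m =>
    have h : 2*(m+1) = (2*m+1)+1 := by ring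
    rw [h, dsum_eq]
    have h1 : (2*m+1+1)/2 = m+1 := by omega
    have h2 : (2*m+1+1) % 2 = 0 := by omega
    rw [h1, h2]
    omega

lemma dsum_two_mul_add_one (n : ℕ) : dsum (2*n+1) = dsum n + 1 := by
  rw [dsum_eq]
  have h1 : (2*n+1)/2 = n := by omega
  have h2 : (2*n+1) % 2 = 1 := by omega
  rw [h1, h2]

lemma dsum_one : dsum 1 = 1 := by
  have := dsum_two_mul_add_one 0
  simpa [dsum_zero] using this

lemma dsum_add_aux : ∀ N p q : ℕ, p + q ≤ N → dsum (p + q) ≤ dsum p + dsum q := by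
  intro N
  induction N with
  | zero =>
    intro p q h
    have hp : p = 0 := by omega
    have hq : q = 0 := by omega
    subst hp; subst hq; simp [dsum_zero]
  | succ N ih =>
    intro p q h
    have hp := Nat.div_add_mod p 2
    have hq := Nat.div_add_mod q 2
    set a := p / 2 with ha
    set b := q / 2 with hb
    have hi : p % 2 = 0 ∨ p % 2 = 1 := by omega
    have hj : q % 2 = 0 ∨ q % 2 = 1 := by omega
    rcases hi with hi | hi <;> rcases hj with hj | hj
    · have hpq : p + q = 2 * (a + b) := by omega
      have hP : p = 2 * a := by omega
      have hQ : q = 2 * b := by omega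
      rw [hpq, hP, hQ, dsum_two_mul, dsum_two_mul, dsum_two_mul]
      exact ih a b (by omega)
    · have hpq : p + q = 2 * (a + b) + 1 := by omega
      have hP : p = 2 * a := by omega
      have hQ : q = 2 * b + 1 := by omega
      rw [hpq, hP, hQ, dsum_two_mul_add_one, dsum_two_mul, dsum_two_mul_add_one]
      have := ih a b (by omega)
      omega
    · have hpq : p + q = 2 * (a + b) + 1 := by omega
      have hP : p = 2 * a + 1 := by omega
      have hQ : q = 2 * b := by omega
      rw [hpq, hP, hQ, dsum_two_mul_add_one, dsum_two_mul, dsum_two_mul_add_one]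
      have := ih a b (by omega)
      omega
    · have hpq : p + q = 2 * (a + b + 1) := by omega
      have hP : p = 2 * a + 1 := by omega
      have hQ : q = 2 * b + 1 := by omega
      rw [hpq, hP, hQ, dsum_two_mul, dsum_two_mul_add_one, dsum_two_mul_add_one]
      have h1 : dsum (a + (b + 1)) ≤ dsum a + dsum (b + 1) := ih a (b+1) (by omega)
      have h2 : dsum (b + 1) ≤ dsum b + dsum 1 := ih b 1 (by omega)
      rw [dsum_one] at h2
      have h3 : a + (b + 1) = a + b + 1 := by ring
      rw [h3] at h1
      omega

lemma dsum_add (p q : ℕ) : dsum (p + q) ≤ dsum p + dsum q :=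
  dsum_add_aux (p+q) p q le_rfl

lemma dsum_pos : ∀ n : ℕ, 1 ≤ n → 1 ≤ dsum n := by
  intro n
  induction n using Nat.strong_induction_on with
  | _ n ih =>
    intro hn
    have h := Nat.div_add_mod n 2
    have hi : n % 2 = 0 ∨ n % 2 = 1 := by omega
    rcases hi with hi | hi
    · have hP : n = 2 * (n / 2) := by omega
      rw [hP, dsum_two_mul]
      exact ih (n/2) (by omega) (by omega)
    · have hP : n = 2 * (n / 2) + 1 := by omega
      rw [hP, dsum_two_mul_add_one]
      omega

lemma dsum_key (p q : ℕ) (hp : 1 ≤ p) (hq : 1 ≤ q) :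
    dsum (p + q) + 1 ≤ dsum p + dsum q + Nat.dist p q := by
  by_cases hpq : p = q
  · subst hpq
    have h1 : p + p = 2 * p := by ring
    rw [h1, dsum_two_mul, Nat.dist_self]
    have := dsum_pos p hp
    omega
  · have h1 : 1 ≤ Nat.dist p q := by
      simp [Nat.dist]; omega
    have := dsum_add p q
    omega

lemma colless_lower (T : FBT) : dsum T.leaves ≤ T.colless + 1 := by
  induction T with
  | leaf => simp [FBT.leaves, FBT.colless, dsum_one]
  | node a b iha ihb =>
    have ha := FBT.leaves_pos a
    have hb := FBT.leaves_pos b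
    have := dsum_key a.leaves b.leaves ha hb
    simp only [FBT.leaves, FBT.colless]
    omega

lemma dsum_pow_sub_one (k : ℕ) : dsum (2 ^ k - 1) = k := by
  induction k with
  | zero => simp [dsum_zero]
  | succ k ih =>
    have h : (1:ℕ) ≤ 2 ^ k := Nat.one_le_two_pow
    have h2 : 2 ^ (k+1) - 1 = 2 * (2 ^ k - 1) + 1 := by
      rw [pow_succ]; omega
    rw [h2, dsum_two_mul_add_one, ih]

theorem minColless_pow_two_sub_one (k : ℕ) (hk : 1 ≤ k) :
    minColless (2 ^ k - 1) = k - 1 := by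
  have hmem : (k - 1) ∈ {m : ℕ | ∃ T : FBT, T.leaves = 2 ^ k - 1 ∧ T.colless = m} := by
    refine ⟨FBT.cat (k - 1), ?_, FBT.cat_colless (k-1)⟩
    rw [FBT.cat_leaves]
    congr 2
    omega
  apply le_antisymm
  · exact Nat.sInf_le hmem
  · apply le_csInf ⟨k - 1, hmem⟩
    rintro m ⟨T, hl, hc⟩
    have := colless_lower T
    rw [hl, dsum_pow_sub_one, hc] at this
    omega
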